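/- Let h be an isometry of the Urysohn space U and δ > 0. Then for every finite subset A ⊆ U there is an isometry f of U such that d(f(a), h(a)) ≤ δ for all a ∈ A, while d(a, f(b)) ≥ δ for all a, b ∈ A. -/

import Mathlib

/-- The one-point extension property characterising the Urysohn space: every finite subset
`F` together with an admissible assignment of (positive) prospective distances `r` is realised
by an actual point `z`. -/
def IsUrysohn (U : Type*) [MetricSpace U] : Prop :=
  ∀ (F : Finset U) (r : U → ℝ),
    (∀ x ∈ F, 0 < r x) →
    (∀ x ∈ F, ∀ y ∈ F, |r x - r y| ≤ dist x y ∧ dist x y ≤ r x + r y) →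
    ∃ z : U, ∀ x ∈ F, dist z x = r x

namespace Stmt17Aux

variable {U : Type*} [MetricSpace U]

/-- A list of pairs is a partial isometry. -/
def Good (l : List (U × U)) : Prop :=
  ∀ p ∈ l, ∀ q ∈ l, dist p.1 q.1 = dist p.2 q.2

theorem good_fst_eq {l : List (U × U)} (hl : Good l) {p q : U × U}
    (hp : p ∈ l) (hq : q ∈ l) (h2 : p.2 = q.2) : p.1 = q.1 := by
  have := hl p hp q hq
  rw [h2, dist_self] at this
  exact dist_eq_zero.mp this

theorem good_snd_eq {l : List (U × U)} (hl : Good l) {p q : U × U}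
    (hp : p ∈ l) (hq : q ∈ l) (h1 : p.1 = q.1) : p.2 = q.2 := by
  have := hl p hp q hq
  rw [h1, dist_self] at this
  exact dist_eq_zero.mp this.symm

theorem extend_forward (hU : IsUrysohn U) {l : List (U × U)} (hl : Good l) (u : U) :
    ∃ z, ∀ p ∈ l, dist p.1 u = dist p.2 z := by
  classical
  by_cases hex : ∃ p ∈ l, p.1 = u
  · obtain ⟨p, hp, hpu⟩ := hex
    exact ⟨p.2, fun q hq => by rw [← hpu]; exact hl q hq p hp⟩
  push_neg at hex
  have hmem : ∀ x ∈ (l.map Prod.snd).toFinset, ∃ p, p ∈ l ∧ p.2 = x := by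
    intro x hx
    simpa using (List.mem_toFinset.mp hx)
  choose pick hpickl hpick2 using hmem
  have hpos : ∀ x ∈ (l.map Prod.snd).toFinset,
      0 < (fun x => if hx : x ∈ (l.map Prod.snd).toFinset then dist u (pick x hx).1 else 1) x := by
    intro x hx
    have : u ≠ (pick x hx).1 := fun he => hex _ (hpickl _ hx) he.symm
    simp only []
    rw [dif_pos hx]
    exact dist_pos.mpr this
  have hcond : ∀ x ∈ (l.map Prod.snd).toFinset, ∀ y ∈ (l.map Prod.snd).toFinset,
      |(fun x => if hx : x ∈ (l.map Prod.snd).toFinset then dist u (pick x hx).1 else 1) x -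
        (fun x => if hx : x ∈ (l.map Prod.snd).toFinset then dist u (pick x hx).1 else 1) y| ≤ dist x y ∧
      dist x y ≤ (fun x => if hx : x ∈ (l.map Prod.snd).toFinset then dist u (pick x hx).1 else 1) x +
        (fun x => if hx : x ∈ (l.map Prod.snd).toFinset then dist u (pick x hx).1 else 1) y := by
    intro x hx y hy
    simp only []
    rw [dif_pos hx, dif_pos hy]
    have hxy : dist x y = dist (pick x hx).1 (pick y hy).1 := by
      have h3 := hl _ (hpickl _ hx) _ (hpickl _ hy)
      rw [hpick2, hpick2] at h3
      exact h3.symm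
    constructor
    · rw [hxy, dist_comm u (pick x hx).1, dist_comm u (pick y hy).1]
      exact abs_dist_sub_le _ _ _
    · rw [hxy]
      calc dist (pick x hx).1 (pick y hy).1 ≤ dist (pick x hx).1 u + dist u (pick y hy).1 :=
            dist_triangle _ _ _
        _ = dist u (pick x hx).1 + dist u (pick y hy).1 := by rw [dist_comm]
  obtain ⟨z, hz⟩ := hU (l.map Prod.snd).toFinset
      (fun x => if hx : x ∈ (l.map Prod.snd).toFinset then dist u (pick x hx).1 else 1)
      hpos hcond
  refine ⟨z, fun p hp => ?_⟩
  have hpF : p.2 ∈ (l.map Prod.snd).toFinset := by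
    simp only [List.mem_toFinset, List.mem_map]
    exact ⟨p, hp, rfl⟩
  have h1 := hz p.2 hpF
  rw [dif_pos hpF] at h1
  have h2 : (pick p.2 hpF).1 = p.1 :=
    good_fst_eq hl (hpickl _ hpF) hp (hpick2 _ hpF)
  rw [h2] at h1
  rw [dist_comm p.1 u, dist_comm p.2 z]
  exact h1.symm

theorem good_swap {l : List (U × U)} (hl : Good l) : Good (l.map Prod.swap) := by
  intro p hp q hq
  simp only [List.mem_map] at hp hq
  obtain ⟨p', hp', rfl⟩ := hp
  obtain ⟨q', hq', rfl⟩ := hq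
  simpa using (hl p' hp' q' hq').symm

theorem extend_backward (hU : IsUrysohn U) {l : List (U × U)} (hl : Good l) (u : U) :
    ∃ w, ∀ p ∈ l, dist p.1 w = dist p.2 u := by
  obtain ⟨z, hz⟩ := extend_forward hU (good_swap hl) u
  refine ⟨z, fun p hp => ?_⟩
  have := hz p.swap (List.mem_map_of_mem hp)
  simpa using this.symm

theorem step (hU : IsUrysohn U) {l : List (U × U)} (hl : Good l) (u : U) :
    ∃ l' : List (U × U), Good l' ∧ l ⊆ l' ∧ (∃ z, (u, z) ∈ l') ∧ (∃ w, (w, u) ∈ l') := by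
  obtain ⟨z, hz⟩ := extend_forward hU hl u
  have hl1 : Good (l ++ [(u, z)]) := by
    intro p hp q hq
    simp only [List.mem_append, List.mem_singleton] at hp hq
    rcases hp with hp | rfl <;> rcases hq with hq | rfl
    · exact hl p hp q hq
    · exact hz p hp
    · have := hz q hq
      rw [dist_comm u q.1, dist_comm z q.2]
      exact this
    · simp
  obtain ⟨w, hw⟩ := extend_backward hU hl1 u
  refine ⟨(l ++ [(u, z)]) ++ [(w, u)], ?_, ?_, ⟨z, ?_⟩, ⟨w, ?_⟩⟩
  · intro p hp q hq
    rcases List.mem_append.mp hp with hp1 | hp1 <;>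
      rcases List.mem_append.mp hq with hq1 | hq1
    · exact hl1 p hp1 q hq1
    · rw [List.mem_singleton.mp hq1]
      exact hw p hp1
    · rw [List.mem_singleton.mp hp1]
      have := hw q hq1
      rw [dist_comm w q.1, dist_comm u q.2]
      exact this
    · rw [List.mem_singleton.mp hp1, List.mem_singleton.mp hq1]
      simp
  · intro p hp; simp [hp]
  · simp
  · simp

noncomputable def chain (hU : IsUrysohn U) (u : ℕ → U) (L0 : List (U × U)) (h0 : Good L0) :
    ℕ → {l : List (U × U) // Good l}
  | 0 => ⟨L0, h0⟩
  | n + 1 =>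
    ⟨(step hU (chain hU u L0 h0 n).2 (u n)).choose,
      (step hU (chain hU u L0 h0 n).2 (u n)).choose_spec.1⟩

theorem chain_zero (hU : IsUrysohn U) (u : ℕ → U) (L0 : List (U × U)) (h0 : Good L0) :
    (chain hU u L0 h0 0).1 = L0 := rfl

theorem chain_succ_spec (hU : IsUrysohn U) (u : ℕ → U) (L0 : List (U × U)) (h0 : Good L0)
    (n : ℕ) :
    (chain hU u L0 h0 n).1 ⊆ (chain hU u L0 h0 (n + 1)).1 ∧
      (∃ z, (u n, z) ∈ (chain hU u L0 h0 (n + 1)).1) ∧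
      ∃ w, (w, u n) ∈ (chain hU u L0 h0 (n + 1)).1 := by
  have hspec := (step hU (chain hU u L0 h0 n).2 (u n)).choose_spec
  exact ⟨hspec.2.1, hspec.2.2.1, hspec.2.2.2⟩

theorem chain_mono (hU : IsUrysohn U) (u : ℕ → U) (L0 : List (U × U)) (h0 : Good L0)
    {n m : ℕ} (hnm : n ≤ m) :
    (chain hU u L0 h0 n).1 ⊆ (chain hU u L0 h0 m).1 := by
  induction m, hnm using Nat.le_induction with
  | base => exact fun p hp => hp
  | succ m hm ih => exact fun p hp => (chain_succ_spec hU u L0 h0 m).1 (ih hp)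

theorem build (hU : IsUrysohn U) (h : U ≃ᵢ U) {δ : ℝ} (hδ : 0 < δ) (B : Finset U) :
    ∀ as : List U, as.Nodup →
      ∃ L : List (U × U), L.map Prod.fst = as ∧ Good L ∧
        ∀ p ∈ L, ∀ b ∈ B, dist p.2 b = dist (h p.1) b + δ := by
  classical
  intro as
  induction as with
  | nil =>
    exact fun _ => ⟨[], rfl, fun p hp => absurd hp List.not_mem_nil,
      fun p hp => absurd hp List.not_mem_nil⟩
  | cons a as ih =>
    intro hnd
    obtain ⟨L, hmap, hG, hLB⟩ := ih (List.Nodup.of_cons hnd)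
    have ha : a ∉ as := (List.nodup_cons.mp hnd).1
    -- the snd-coordinates of `L` avoid `B`
    have hdisj : ∀ b ∈ B, b ∉ (L.map Prod.snd).toFinset := by
      intro b hb hmem
      rw [List.mem_toFinset, List.mem_map] at hmem
      obtain ⟨p, hp, hp2⟩ := hmem
      have h1 := hLB p hp b hb
      rw [hp2, dist_self] at h1
      have h2 := dist_nonneg (x := (h p.1)) (y := b)
      linarith
    have hmem : ∀ x ∈ (L.map Prod.snd).toFinset, ∃ p, p ∈ L ∧ p.2 = x := by
      intro x hx
      simpa using (List.mem_toFinset.mp hx)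
    choose pick hpickl hpick2 using hmem
    set r : U → ℝ := fun v =>
      if hv : v ∈ (L.map Prod.snd).toFinset then dist a (pick v hv).1
      else dist (h a) v + δ with hr
    set F : Finset U := B ∪ (L.map Prod.snd).toFinset with hF
    -- value of r on the two parts
    have hrB : ∀ b ∈ B, r b = dist (h a) b + δ := fun b hb => dif_neg (hdisj b hb)
    have hrL : ∀ x (hx : x ∈ (L.map Prod.snd).toFinset), r x = dist a (pick x hx).1 :=
      fun x hx => dif_pos hx
    have hfst : ∀ x (hx : x ∈ (L.map Prod.snd).toFinset), (pick x hx).1 ∈ as := by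
      intro x hx
      rw [← hmap]
      exact List.mem_map_of_mem (hpickl x hx)
    have hpos : ∀ x ∈ F, 0 < r x := by
      intro x hx
      rcases Finset.mem_union.mp hx with hx | hx
      · rw [hrB x hx]
        have := dist_nonneg (x := (h a)) (y := x)
        linarith
      · rw [hrL x hx]
        refine dist_pos.mpr fun he => ha ?_
        rw [he]; exact hfst x hx
    have hdL : ∀ x (hx : x ∈ (L.map Prod.snd).toFinset) (b : U), b ∈ B →
        dist x b = dist (h (pick x hx).1) b + δ := by
      intro x hx b hb
      have := hLB _ (hpickl x hx) b hb
      rw [hpick2] at this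
      exact this
    have hcond : ∀ x ∈ F, ∀ y ∈ F, |r x - r y| ≤ dist x y ∧ dist x y ≤ r x + r y := by
      intro x hx y hy
      rcases Finset.mem_union.mp hx with hx1 | hx1 <;>
        rcases Finset.mem_union.mp hy with hy1 | hy1
      · -- both in B
        rw [hrB x hx1, hrB y hy1]
        constructor
        · have h1 : |dist (h a) x + δ - (dist (h a) y + δ)| = |dist x (h a) - dist y (h a)| := by
            rw [dist_comm x (h a), dist_comm y (h a)]; ring_nf
          rw [h1]
          exact abs_dist_sub_le _ _ _
        · have h1 := dist_triangle x (h a) y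
          have h2 : dist x (h a) = dist (h a) x := dist_comm _ _
          linarith
      · -- x ∈ B, y ∈ snd L
        rw [hrB x hx1, hrL y hy1]
        have hda : dist a (pick y hy1).1 = dist (h a) (h (pick y hy1).1) := (h.dist_eq _ _).symm
        have hdy : dist y x = dist (h (pick y hy1).1) x + δ := hdL y hy1 x hx1
        have hxy : dist x y = dist y x := dist_comm _ _
        have t1 := dist_triangle (h a) (h (pick y hy1).1) x
        have t2 := dist_triangle (h a) x (h (pick y hy1).1)
        have t3 := dist_triangle (h (pick y hy1).1) (h a) x
        have c1 : dist (h (pick y hy1).1) (h a) = dist (h a) (h (pick y hy1).1) := dist_comm _ _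
        have c2 : dist x (h (pick y hy1).1) = dist (h (pick y hy1).1) x := dist_comm _ _
        constructor
        · rw [abs_le]
          constructor <;> [skip; skip] <;> nlinarith [hda, hdy, hxy, t1, t2, t3, c1, c2]
        · nlinarith [hda, hdy, hxy, t1, t2, t3, c1, c2]
      · -- x ∈ snd L, y ∈ B
        rw [hrL x hx1, hrB y hy1]
        have hda : dist a (pick x hx1).1 = dist (h a) (h (pick x hx1).1) := (h.dist_eq _ _).symm
        have hdx : dist x y = dist (h (pick x hx1).1) y + δ := hdL x hx1 y hy1
        have t1 := dist_triangle (h a) (h (pick x hx1).1) y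
        have t2 := dist_triangle (h a) y (h (pick x hx1).1)
        have t3 := dist_triangle (h (pick x hx1).1) (h a) y
        have c1 : dist (h (pick x hx1).1) (h a) = dist (h a) (h (pick x hx1).1) := dist_comm _ _
        have c2 : dist y (h (pick x hx1).1) = dist (h (pick x hx1).1) y := dist_comm _ _
        constructor
        · rw [abs_le]
          constructor <;> nlinarith [hda, hdx, t1, t2, t3, c1, c2]
        · nlinarith [hda, hdx, t1, t2, t3, c1, c2]
      · -- both snd L
        rw [hrL x hx1, hrL y hy1]
        have hxy : dist x y = dist (pick x hx1).1 (pick y hy1).1 := by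
          have h3 := hG _ (hpickl _ hx1) _ (hpickl _ hy1)
          rw [hpick2, hpick2] at h3
          exact h3.symm
        constructor
        · rw [hxy, dist_comm a (pick x hx1).1, dist_comm a (pick y hy1).1]
          exact abs_dist_sub_le _ _ _
        · rw [hxy]
          have t1 := dist_triangle (pick x hx1).1 a (pick y hy1).1
          have c1 : dist (pick x hx1).1 a = dist a (pick x hx1).1 := dist_comm _ _
          linarith
    obtain ⟨z, hz⟩ := hU F r hpos hcond
    have hzL : ∀ p ∈ L, dist z p.2 = dist a p.1 := by
      intro p hp
      have hpF : p.2 ∈ (L.map Prod.snd).toFinset := by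
        rw [List.mem_toFinset, List.mem_map]
        exact ⟨p, hp, rfl⟩
      have h1 := hz p.2 (Finset.mem_union_right _ hpF)
      rw [hrL p.2 hpF] at h1
      rw [h1, good_fst_eq hG (hpickl _ hpF) hp (hpick2 _ hpF)]
    have hzB : ∀ b ∈ B, dist z b = dist (h a) b + δ := by
      intro b hb
      rw [hz b (Finset.mem_union_left _ hb), hrB b hb]
    refine ⟨(a, z) :: L, by rw [List.map_cons, hmap], ?_, ?_⟩
    · intro p hp q hq
      rcases List.mem_cons.mp hp with rfl | hp1 <;> rcases List.mem_cons.mp hq with rfl | hq1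
      · simp
      · show dist a q.1 = dist z q.2
        exact (hzL q hq1).symm
      · show dist p.1 a = dist p.2 z
        rw [dist_comm p.1 a, dist_comm p.2 z]
        exact (hzL p hp1).symm
      · exact hG p hp1 q hq1
    · intro p hp b hb
      rcases List.mem_cons.mp hp with rfl | hp1
      · exact hzB b hb
      · exact hLB p hp1 b hb

theorem extend_isometry [CompleteSpace U] {D : Set U} (hD : Dense D) (φ : D → U)
    (hφ : Isometry φ) : ∃ Φ : U → U, Isometry Φ ∧ ∀ a : D, Φ a = φ a := by
  have he : IsUniformInducing ((↑) : D → U) := isometry_subtype_coe.isUniformInducing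
  have hd : DenseRange ((↑) : D → U) := hD.denseRange_val
  have hf : UniformContinuous φ := hφ.uniformContinuous
  refine ⟨(he.isDenseInducing hd).extend φ, ?_, fun a => uniformly_extend_of_ind he hd hf a⟩
  have heq : ∀ a : D, (he.isDenseInducing hd).extend φ a = φ a :=
    fun a => uniformly_extend_of_ind he hd hf a
  have hcont : Continuous ((he.isDenseInducing hd).extend φ) :=
    (uniformContinuous_uniformly_extend he hd hf).continuous
  apply Isometry.of_dist_eq
  intro x y
  have hdd : Dense ((D ×ˢ D : Set (U × U))) := hD.prod hD
  have hfun : (fun p : U × U => dist ((he.isDenseInducing hd).extend φ p.1)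
      ((he.isDenseInducing hd).extend φ p.2)) = fun p : U × U => dist p.1 p.2 := by
    apply Continuous.ext_on hdd
    · exact (hcont.comp continuous_fst).dist (hcont.comp continuous_snd)
    · exact continuous_fst.dist continuous_snd
    · rintro ⟨x, y⟩ ⟨hx, hy⟩
      simp only []
      rw [show x = ((⟨x, hx⟩ : D) : U) from rfl, show y = ((⟨y, hy⟩ : D) : U) from rfl,
        heq ⟨x, hx⟩, heq ⟨y, hy⟩]
      exact hφ.dist_eq _ _
  exact congrFun hfun (x, y)

end Stmt17Aux

/-- Let `h` be an isometry of the Urysohn space `U` and `δ > 0`. Then for every finite subset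
`A ⊆ U` there is an isometry `f` of `U` such that `dist (f a) (h a) ≤ δ` for all `a ∈ A`,
while `dist a (f b) ≥ δ` for all `a, b ∈ A`. -/
theorem stmt17 {U : Type*} [MetricSpace U] [CompleteSpace U]
    [TopologicalSpace.SeparableSpace U] (hU : IsUrysohn U)
    (h : U ≃ᵢ U) (δ : ℝ) (hδ : 0 < δ) (A : Finset U) :
    ∃ f : U ≃ᵢ U, (∀ a ∈ A, dist (f a) (h a) ≤ δ) ∧
      ∀ a ∈ A, ∀ b ∈ A, δ ≤ dist a (f b) := by
  classical
  set B : Finset U := A ∪ A.image h with hB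
  obtain ⟨L0, hmap, hG0, hL0B⟩ := Stmt17Aux.build hU h hδ B A.toList A.nodup_toList
  have hne : Nonempty U := by
    obtain ⟨z, _⟩ := hU ∅ (fun _ => 1) (by simp) (by simp)
    exact ⟨z⟩
  obtain ⟨u, hu⟩ := TopologicalSpace.exists_dense_seq U
  set C := Stmt17Aux.chain hU u L0 hG0 with hC
  set S : Set (U × U) := {p | ∃ n, p ∈ (C n).1} with hS
  have hGS : ∀ p ∈ S, ∀ q ∈ S, dist p.1 q.1 = dist p.2 q.2 := by
    rintro p ⟨n, hn⟩ q ⟨m, hm⟩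
    exact (C (max n m)).2 p (Stmt17Aux.chain_mono hU u L0 hG0 (le_max_left n m) hn) q
      (Stmt17Aux.chain_mono hU u L0 hG0 (le_max_right n m) hm)
  have hS0 : ∀ p ∈ L0, p ∈ S := fun p hp => ⟨0, hp⟩
  have func1 : ∀ p ∈ S, ∀ q ∈ S, p.1 = q.1 → p.2 = q.2 := by
    intro p hp q hq he
    have := hGS p hp q hq
    rw [he, dist_self] at this
    exact dist_eq_zero.mp this.symm
  have func2 : ∀ p ∈ S, ∀ q ∈ S, p.2 = q.2 → p.1 = q.1 := by
    intro p hp q hq he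
    have := hGS p hp q hq
    rw [he, dist_self] at this
    exact dist_eq_zero.mp this
  set D : Set U := Prod.fst '' S with hD
  set R : Set U := Prod.snd '' S with hR
  have hDdense : Dense D := by
    refine Dense.mono ?_ hu
    rintro x ⟨n, rfl⟩
    obtain ⟨z, hz⟩ := (Stmt17Aux.chain_succ_spec hU u L0 hG0 n).2.1
    exact ⟨(u n, z), ⟨n + 1, hz⟩, rfl⟩
  have hRdense : Dense R := by
    refine Dense.mono ?_ hu
    rintro x ⟨n, rfl⟩
    obtain ⟨w, hw⟩ := (Stmt17Aux.chain_succ_spec hU u L0 hG0 n).2.2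
    exact ⟨(w, u n), ⟨n + 1, hw⟩, rfl⟩
  set φ : D → U := fun a => (Classical.choose a.2).2 with hφdef
  have hφS : ∀ a : D, ((a : U), φ a) ∈ S := by
    intro a
    have hspec := Classical.choose_spec a.2
    have heq : ((a : U), φ a) = Classical.choose a.2 := by
      refine Prod.ext_iff.mpr ⟨hspec.2.symm, rfl⟩
    rw [heq]
    exact hspec.1
  have hφ : Isometry φ := by
    refine Isometry.of_dist_eq fun a b => ?_
    have := hGS _ (hφS a) _ (hφS b)
    rw [Subtype.dist_eq]
    exact this.symm
  set ψ : R → U := fun b => (Classical.choose b.2).1 with hψdef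
  have hψS : ∀ b : R, (ψ b, (b : U)) ∈ S := by
    intro b
    have hspec := Classical.choose_spec b.2
    have heq : (ψ b, (b : U)) = Classical.choose b.2 := by
      refine Prod.ext_iff.mpr ⟨rfl, hspec.2.symm⟩
    rw [heq]
    exact hspec.1
  have hψ : Isometry ψ := by
    refine Isometry.of_dist_eq fun a b => ?_
    have := hGS _ (hψS a) _ (hψS b)
    rw [Subtype.dist_eq]
    exact this
  obtain ⟨Φ, hΦiso, hΦeq⟩ := Stmt17Aux.extend_isometry hDdense φ hφ
  obtain ⟨Ψ, hΨiso, hΨeq⟩ := Stmt17Aux.extend_isometry hRdense ψ hψ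
  have hΨΦ : ∀ x, Ψ (Φ x) = x := by
    have hfun : (fun x => Ψ (Φ x)) = fun x => x := by
      apply Continuous.ext_on hDdense (hΨiso.continuous.comp hΦiso.continuous) continuous_id
      intro x hx
      have h1 : Φ x = φ ⟨x, hx⟩ := hΦeq ⟨x, hx⟩
      have hmemR : φ ⟨x, hx⟩ ∈ R := ⟨((x : U), φ ⟨x, hx⟩), hφS ⟨x, hx⟩, rfl⟩
      have h2 : Ψ (φ ⟨x, hx⟩) = ψ ⟨φ ⟨x, hx⟩, hmemR⟩ := hΨeq ⟨φ ⟨x, hx⟩, hmemR⟩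
      have h3 := hψS ⟨φ ⟨x, hx⟩, hmemR⟩
      have h4 := func2 _ h3 _ (hφS ⟨x, hx⟩) rfl
      show Ψ (Φ x) = x
      rw [h1, h2]
      simpa using h4
    exact fun x => congrFun hfun x
  have hΦΨ : ∀ x, Φ (Ψ x) = x := by
    have hfun : (fun x => Φ (Ψ x)) = fun x => x := by
      apply Continuous.ext_on hRdense (hΦiso.continuous.comp hΨiso.continuous) continuous_id
      intro x hx
      have h1 : Ψ x = ψ ⟨x, hx⟩ := hΨeq ⟨x, hx⟩
      have hmemD : ψ ⟨x, hx⟩ ∈ D := ⟨(ψ ⟨x, hx⟩, (x : U)), hψS ⟨x, hx⟩, rfl⟩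
      have h2 : Φ (ψ ⟨x, hx⟩) = φ ⟨ψ ⟨x, hx⟩, hmemD⟩ := hΦeq ⟨ψ ⟨x, hx⟩, hmemD⟩
      have h3 := hφS ⟨ψ ⟨x, hx⟩, hmemD⟩
      have h4 := func1 _ h3 _ (hψS ⟨x, hx⟩) rfl
      show Φ (Ψ x) = x
      rw [h1, h2]
      simpa using h4
    exact fun x => congrFun hfun x
  refine ⟨⟨⟨Φ, Ψ, hΨΦ, hΦΨ⟩, hΦiso⟩, ?_, ?_⟩
  · intro a haA
    have haL : ∃ p ∈ L0, p.1 = a := by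
      have : a ∈ L0.map Prod.fst := by rw [hmap]; exact Finset.mem_toList.mpr haA
      simpa using this
    obtain ⟨p, hp, hp1⟩ := haL
    have haD : a ∈ D := ⟨p, hS0 p hp, hp1⟩
    have h1 : Φ a = φ ⟨a, haD⟩ := hΦeq ⟨a, haD⟩
    have h2 : φ ⟨a, haD⟩ = p.2 := by
      have := func1 _ (hφS ⟨a, haD⟩) _ (hS0 p hp) (by rw [hp1])
      exact this
    have h3 : dist p.2 (h a) = δ := by
      have := hL0B p hp (h a) (Finset.mem_union_right _ (Finset.mem_image_of_mem h haA))
      rw [hp1, dist_self] at this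
      rw [this, zero_add]
    show dist (Φ a) (h a) ≤ δ
    rw [h1, h2, h3]
  · intro a haA b hbA
    have hbL : ∃ p ∈ L0, p.1 = b := by
      have : b ∈ L0.map Prod.fst := by rw [hmap]; exact Finset.mem_toList.mpr hbA
      simpa using this
    obtain ⟨p, hp, hp1⟩ := hbL
    have hbD : b ∈ D := ⟨p, hS0 p hp, hp1⟩
    have h1 : Φ b = φ ⟨b, hbD⟩ := hΦeq ⟨b, hbD⟩
    have h2 : φ ⟨b, hbD⟩ = p.2 := func1 _ (hφS ⟨b, hbD⟩) _ (hS0 p hp) (by rw [hp1])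
    have h3 : dist p.2 a = dist (h p.1) a + δ :=
      hL0B p hp a (Finset.mem_union_left _ haA)
    show δ ≤ dist a (Φ b)
    rw [h1, h2, dist_comm a p.2, h3]
    have := dist_nonneg (x := h p.1) (y := a)
    linarith
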